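/- For n ≥ 3, the n×n dissimilarity matrix M defined by M_{ij} = min(i, j) (for 1 ≤ i < j ≤ n) has star tree rank exactly n−2; in particular, it cannot be written as the entrywise minimum of fewer than n−2 star tree matrices. -/

import Mathlib

/-- Off-diagonal entrywise (tropical) minimum decomposition of a dissimilarity matrix. -/
def DissMinDecomp {n r : ℕ} (M : Fin n → Fin n → ℝ) (N : Fin r → Fin n → Fin n → ℝ) : Prop :=
  ∀ i j : Fin n, i ≠ j → (∀ k, M i j ≤ N k i j) ∧ (∃ k, M i j = N k i j)

/-- The dissimilarity matrix `M` has star tree rank at most `r`: it is the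
entrywise minimum of `r` star tree matrices `(v k i + v k j)`. -/
def StarRankLe {n : ℕ} (r : ℕ) (M : Fin n → Fin n → ℝ) : Prop :=
  ∃ v : Fin r → Fin n → ℝ, DissMinDecomp M (fun k i j => v k i + v k j)

/-- The dissimilarity matrix with `M i j = min(i,j)` for `1 ≤ i < j ≤ n`
(indices shifted to start at 1). -/
noncomputable def minMatrix (n : ℕ) : Fin n → Fin n → ℝ := fun i j =>
  (min ((i : ℕ) + 1) ((j : ℕ) + 1) : ℕ)

noncomputable def fanV (n : ℕ) (k : Fin (n-2)) (i : Fin n) : ℝ :=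
  if (i : ℕ) < (k : ℕ) then (n : ℝ)
  else if (i : ℕ) = (k : ℕ) then ((k : ℕ) : ℝ) + 1 - ((n : ℝ) - 1)/2
  else ((n : ℝ) - 1)/2

lemma fan_feas (n : ℕ) (hn : 3 ≤ n) (k : Fin (n-2)) (i j : Fin n) (hij : (i:ℕ) < (j:ℕ)) :
    minMatrix n i j ≤ fanV n k i + fanV n k j := by
  have hi : (i : ℕ) < n := i.isLt
  have hj : (j : ℕ) < n := j.isLt
  have hk : (k : ℕ) < n - 2 := k.isLt
  have hmin : minMatrix n i j = ((i:ℕ) : ℝ) + 1 := by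
    unfold minMatrix
    have : min ((i:ℕ)+1) ((j:ℕ)+1) = (i:ℕ)+1 := by omega
    rw [this]; push_cast; ring
  rw [hmin]
  have hin : ((i:ℕ) : ℝ) + 1 ≤ (n : ℝ) := by
    have : (i:ℕ) + 1 ≤ n := hi
    exact_mod_cast this
  have hnr : (3 : ℝ) ≤ (n : ℝ) := by exact_mod_cast hn
  unfold fanV
  rcases lt_trichotomy ((i:ℕ)) ((k:ℕ)) with h1 | h1 | h1
  · -- i < k
    rw [if_pos h1]
    rcases lt_trichotomy ((j:ℕ)) ((k:ℕ)) with h2 | h2 | h2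
    · rw [if_pos h2]; linarith
    · rw [if_neg (by omega), if_pos h2]
      have hik : ((i:ℕ) : ℝ) + 1 ≤ ((k:ℕ) : ℝ) := by exact_mod_cast h1
      linarith
    · rw [if_neg (by omega), if_neg (by omega)]; linarith
  · -- i = k
    rw [if_neg (by omega), if_pos h1]
    rw [if_neg (by omega), if_neg (by omega)]
    have : ((i:ℕ) : ℝ) = ((k:ℕ) : ℝ) := by exact_mod_cast h1
    linarith
  · -- i > k : v i = c, and j > k too
    rw [if_neg (by omega), if_neg (by omega)]
    rw [if_neg (by omega), if_neg (by omega)]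
    -- need i+1 ≤ n-1, i.e. i ≤ n-2, true since i < j < n
    have : (i:ℕ) + 1 ≤ n - 1 := by omega
    have h' : ((i:ℕ) : ℝ) + 1 ≤ (n : ℝ) - 1 := by
      have hcast : (((i:ℕ) + 1 : ℕ) : ℝ) ≤ ((n - 1 : ℕ) : ℝ) := by exact_mod_cast this
      push_cast at hcast
      have : ((n - 1 : ℕ) : ℝ) = (n:ℝ) - 1 := by
        have : 1 ≤ n := by omega
        push_cast [this]; ring
      linarith [hcast, this.symm.le]
    linarith

lemma fan_tight (n : ℕ) (hn : 3 ≤ n) (i j : Fin n) (hij : (i:ℕ) < (j:ℕ)) :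
    ∃ k : Fin (n-2), minMatrix n i j = fanV n k i + fanV n k j := by
  have hi : (i : ℕ) < n := i.isLt
  have hj : (j : ℕ) < n := j.isLt
  have hmin : minMatrix n i j = ((i:ℕ) : ℝ) + 1 := by
    unfold minMatrix
    have : min ((i:ℕ)+1) ((j:ℕ)+1) = (i:ℕ)+1 := by omega
    rw [this]; push_cast; ring
  rw [hmin]
  by_cases hcase : (i:ℕ) ≤ n - 3
  · refine ⟨⟨(i:ℕ), by omega⟩, ?_⟩
    have hji : ¬ ((j:ℕ) < (i:ℕ)) := by omega
    have hji2 : ¬ ((j:ℕ) = (i:ℕ)) := by omega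
    unfold fanV
    simp only [Fin.val_mk, lt_irrefl, if_false, if_true, eq_self_iff_true, hji, hji2]
    ring
  · -- i = n-2, j = n-1
    have hieq : (i:ℕ) = n - 2 := by omega
    have hjeq : (j:ℕ) = n - 1 := by omega
    refine ⟨⟨n - 3, by omega⟩, ?_⟩
    unfold fanV
    simp only [Fin.val_mk]
    rw [if_neg (by omega), if_neg (by omega), if_neg (by omega), if_neg (by omega)]
    have : ((i:ℕ) : ℝ) = (n:ℝ) - 2 := by
      rw [hieq]
      have h2 : 2 ≤ n := by omega
      push_cast [Nat.cast_sub h2]; ring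
    rw [this]; ring

theorem upper (n : ℕ) (hn : 3 ≤ n) : StarRankLe (n - 2) (minMatrix n) := by
  refine ⟨fanV n, ?_⟩
  intro i j hij
  have hsymm : ∀ (i j : Fin n), minMatrix n i j = minMatrix n j i := by
    intro i j; unfold minMatrix; rw [min_comm]
  rcases lt_trichotomy ((i:ℕ)) ((j:ℕ)) with h | h | h
  · exact ⟨fun k => fan_feas n hn k i j h, by
      obtain ⟨k, hk⟩ := fan_tight n hn i j h; exact ⟨k, hk⟩⟩
  · exact absurd (Fin.ext h) hij
  · constructor
    · intro k
      have h2 := fan_feas n hn k j i h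
      show minMatrix n i j ≤ fanV n k i + fanV n k j
      rw [hsymm i j]; linarith
    · obtain ⟨k, hk⟩ := fan_tight n hn j i h
      refine ⟨k, ?_⟩
      show minMatrix n i j = fanV n k i + fanV n k j
      rw [hsymm i j]; linarith

lemma shapeLemma {S : Finset ℕ} (v : ℕ → ℝ)
    (feas : ∀ x ∈ S, ∀ y ∈ S, x < y → (x:ℝ) + 1 ≤ v x + v y)
    {a q : ℕ} (ha : a ∈ S) (hq : q ∈ S) (haq : a < q)
    (hbelow : ∀ z ∈ S, ∀ z' ∈ S, z < z' → z' < a → False)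
    (habove : ∀ z ∈ S, ∀ z' ∈ S, z < z' → q < z → False)
    (htight : v a + v q = (a:ℝ) + 1)
    {x y : ℕ} (hx : x ∈ S) (hy : y ∈ S) (hxy : x < y)
    (hxyt : v x + v y = (x:ℝ) + 1) :
    x = a ∨ x = q ∨ y = a ∨ y = q := by
  by_contra hcon
  push_neg at hcon
  obtain ⟨hxa, hxq, hya, hyq⟩ := hcon
  rcases lt_or_gt_of_ne hyq with hyltq | hygtq
  · have hay : a < y := by
      rcases lt_or_gt_of_ne hya with h | h
      · exact (hbelow x hx y hy hxy h).elim
      · exact h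
    have hyb : v y ≥ (y:ℝ) + 1 - v q := by
      have := feas y hy q hq hyltq; linarith
    rcases lt_or_gt_of_ne hxa with hxlta | hxgta
    · have hxb : v x ≥ (x:ℝ) + 1 - v a := by
        have := feas x hx a ha hxlta; linarith
      have hcast : (a:ℝ) < (y:ℝ) := by exact_mod_cast hay
      linarith
    · have hxb : v x ≥ (a:ℝ) + 1 - v a := by
        have := feas a ha x hx hxgta; linarith
      have hxy' : (x:ℝ) < (y:ℝ) := by exact_mod_cast hxy
      linarith
  · have hxq' : x < q := by
      rcases lt_or_gt_of_ne hxq with h | h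
      · exact h
      · exact (habove x hx y hy hxy h).elim
    have hyb : v y ≥ (q:ℝ) + 1 - v q := by
      have := feas q hq y hy hygtq; linarith
    rcases lt_or_gt_of_ne hxa with hxlta | hxgta
    · have hxb : v x ≥ (x:ℝ) + 1 - v a := by
        have := feas x hx a ha hxlta; linarith
      have : (a:ℝ) < (q:ℝ) := by exact_mod_cast haq
      linarith
    · have hxb : v x ≥ (a:ℝ) + 1 - v a := by
        have := feas a ha x hx hxgta; linarith
      have : (x:ℝ) < (q:ℝ) := by exact_mod_cast hxq'
      linarith

/-- The main lower bound: if star matrices indexed by `K` are feasible on an index set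
`S` (with value `x+1` on a pair with smaller element `x`) and every pair of `S`,
except possibly the pair of the two smallest and the pair of the two largest elements,
is tight somewhere, then `|K| ≥ |S| - 2`. -/
theorem lowerMain {ι : Type} [DecidableEq ι] :
    ∀ (m : ℕ) (S : Finset ℕ) (K : Finset ι) (v : ι → ℕ → ℝ),
    S.card ≤ m → 3 ≤ S.card →
    (∀ k ∈ K, ∀ x ∈ S, ∀ y ∈ S, x < y → (x:ℝ) + 1 ≤ v k x + v k y) →
    (∀ x ∈ S, ∀ y ∈ S, x < y →
        (∃ z ∈ S, z < y ∧ z ≠ x) → (∃ z ∈ S, x < z ∧ z ≠ y) →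
        ∃ k ∈ K, v k x + v k y = (x:ℝ) + 1) →
    S.card - 2 ≤ K.card := by
  intro m
  induction m with
  | zero => intro S K v hm h3 _ _; omega
  | succ m ih =>
    intro S K v hm h3 feas cover
    by_cases hsm : S.card ≤ m
    · exact ih S K v hsm h3 feas cover
    push_neg at hsm
    -- basic structure of S
    have hS0 : S.Nonempty := Finset.card_pos.mp (by omega)
    set a := S.min' hS0 with ha_def
    have ha : a ∈ S := S.min'_mem hS0
    have hamin : ∀ z ∈ S, a ≤ z := fun z hz => S.min'_le z hz
    have hSe : (S.erase a).Nonempty := by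
      rw [← Finset.card_pos, Finset.card_erase_of_mem ha]; omega
    set b := (S.erase a).min' hSe with hb_def
    have hbmem : b ∈ S.erase a := Finset.min'_mem _ hSe
    have hb : b ∈ S := (Finset.mem_erase.mp hbmem).2
    have hab : a < b := lt_of_le_of_ne (hamin b hb) (Ne.symm (Finset.mem_erase.mp hbmem).1)
    have hbmin : ∀ z ∈ S, z ≠ a → b ≤ z := fun z hz hza =>
      Finset.min'_le _ z (Finset.mem_erase.mpr ⟨hza, hz⟩)
    set t := S.max' hS0 with ht_def
    have ht : t ∈ S := S.max'_mem hS0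
    have htmax : ∀ z ∈ S, z ≤ t := fun z hz => S.le_max' z hz
    have hSt : (S.erase t).Nonempty := by
      rw [← Finset.card_pos, Finset.card_erase_of_mem ht]; omega
    set t2 := (S.erase t).max' hSt with ht2_def
    have ht2mem : t2 ∈ S.erase t := Finset.max'_mem _ hSt
    have ht2 : t2 ∈ S := (Finset.mem_erase.mp ht2mem).2
    have ht2t : t2 < t := lt_of_le_of_ne (htmax t2 ht2) (Finset.mem_erase.mp ht2mem).1
    have ht2max : ∀ z ∈ S, z ≠ t → z ≤ t2 := fun z hz hzt =>
      Finset.le_max' _ z (Finset.mem_erase.mpr ⟨hzt, hz⟩)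
    have hbt : b < t := by
      by_contra h
      push_neg at h
      have hsub : S ⊆ {a, b} := by
        intro z hz
        simp only [Finset.mem_insert, Finset.mem_singleton]
        by_cases hza : z = a
        · left; exact hza
        · right
          have h1 := hbmin z hz hza
          have h2 := htmax z hz
          omega
      have hc := Finset.card_le_card hsub
      have hc2 : ({a, b} : Finset ℕ).card ≤ 2 := by
        apply le_trans (Finset.card_insert_le _ _); simp
      omega
    -- shape-lemma side conditions
    have below_a : ∀ z ∈ S, ∀ z' ∈ S, z < z' → z' < a → False := by
      intro z hz z' hz' _ h; exact absurd (hamin z' hz') (by omega)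
    have below_b : ∀ z ∈ S, ∀ z' ∈ S, z < z' → z' < b → False := by
      intro z hz z' hz' hzz h
      have hz'a : z' = a := by
        by_contra hne; exact absurd (hbmin z' hz' hne) (by omega)
      exact absurd (hamin z hz) (by omega)
    have above_t : ∀ z ∈ S, ∀ z' ∈ S, z < z' → t < z → False := by
      intro z hz z' hz' _ h; exact absurd (htmax z hz) (by omega)
    have above_t2 : ∀ z ∈ S, ∀ z' ∈ S, z < z' → t2 < z → False := by
      intro z hz z' hz' hzz h
      have hzt : z ≠ t := by
        intro hzt; subst hzt; exact absurd (htmax z' hz') (by omega)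
      exact absurd (ht2max z hz hzt) (by omega)
    by_cases hc3 : S.card = 3
    · -- base case: |S| = 3
      obtain ⟨k, hk, -⟩ := cover a ha t ht (hab.trans hbt)
        ⟨b, hb, hbt, by omega⟩ ⟨b, hb, hab, by omega⟩
      have : 0 < K.card := Finset.card_pos.mpr ⟨k, hk⟩
      omega
    -- now |S| ≥ 4
    have hc4' : 4 ≤ S.card := by omega
    have hbt2 : b < t2 := by
      by_contra h
      push_neg at h
      have hsub : S ⊆ {a, b, t} := by
        intro z hz
        simp only [Finset.mem_insert, Finset.mem_singleton]
        by_cases hza : z = a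
        · left; exact hza
        by_cases hzt : z = t
        · right; right; exact hzt
        · right; left
          have h1 := hbmin z hz hza
          have h2 := ht2max z hz hzt
          omega
      have hc := Finset.card_le_card hsub
      have hc2 : ({a, b, t} : Finset ℕ).card ≤ 3 := by
        apply le_trans (Finset.card_insert_le _ _)
        have : ({b, t} : Finset ℕ).card ≤ 2 := by
          apply le_trans (Finset.card_insert_le _ _); simp
        omega
      omega
    -- the four corner coverers
    obtain ⟨k1, hk1, htight1⟩ := cover a ha t ht (hab.trans hbt)
      ⟨b, hb, hbt, by omega⟩ ⟨b, hb, hab, by omega⟩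
    obtain ⟨k2, hk2, htight2⟩ := cover b hb t ht hbt
      ⟨a, ha, hab.trans hbt, by omega⟩ ⟨t2, ht2, hbt2, by omega⟩
    obtain ⟨k3, hk3, htight3⟩ := cover a ha t2 ht2 (hab.trans hbt2)
      ⟨b, hb, hbt2, by omega⟩ ⟨b, hb, hab, by omega⟩
    obtain ⟨k4, hk4, htight4⟩ := cover b hb t2 ht2 hbt2
      ⟨a, ha, hab.trans hbt2, by omega⟩ ⟨t, ht, hbt, by omega⟩
    -- shape facts
    have Sh1 : ∀ x ∈ S, ∀ y ∈ S, x < y → v k1 x + v k1 y = (x:ℝ) + 1 →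
        x = a ∨ x = t ∨ y = a ∨ y = t := fun x hx y hy hxy h =>
      shapeLemma (v k1) (feas k1 hk1) ha ht (hab.trans hbt) below_a above_t htight1 hx hy hxy h
    have Sh2 : ∀ x ∈ S, ∀ y ∈ S, x < y → v k2 x + v k2 y = (x:ℝ) + 1 →
        x = b ∨ x = t ∨ y = b ∨ y = t := fun x hx y hy hxy h =>
      shapeLemma (v k2) (feas k2 hk2) hb ht hbt below_b above_t htight2 hx hy hxy h
    have Sh3 : ∀ x ∈ S, ∀ y ∈ S, x < y → v k3 x + v k3 y = (x:ℝ) + 1 →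
        x = a ∨ x = t2 ∨ y = a ∨ y = t2 := fun x hx y hy hxy h =>
      shapeLemma (v k3) (feas k3 hk3) ha ht2 (hab.trans hbt2) below_a above_t2 htight3 hx hy hxy h
    have Sh4 : ∀ x ∈ S, ∀ y ∈ S, x < y → v k4 x + v k4 y = (x:ℝ) + 1 →
        x = b ∨ x = t2 ∨ y = b ∨ y = t2 := fun x hx y hy hxy h =>
      shapeLemma (v k4) (feas k4 hk4) hb ht2 hbt2 below_b above_t2 htight4 hx hy hxy h
    by_cases hc4 : S.card = 4
    · -- base case |S| = 4 : k1 ≠ k4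
      have hne : k1 ≠ k4 := by
        rintro rfl
        rcases Sh1 b hb t2 ht2 hbt2 htight4 with h | h | h | h <;> omega
      have : 1 < K.card := Finset.one_lt_card.mpr ⟨k1, hk1, k4, hk4, hne⟩
      omega
    have hc5 : 5 ≤ S.card := by omega
    -- generic deletion of one index and one matrix
    by_cases heq13 : k1 = k3
    · -- delete a and k1
      have hcard' : (S.erase a).card = S.card - 1 := Finset.card_erase_of_mem ha
      have hres := ih (S.erase a) (K.erase k1) v (by omega) (by omega)
        (fun k hk x hx y hy hxy => feas k (Finset.mem_of_mem_erase hk) x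
          (Finset.mem_of_mem_erase hx) y (Finset.mem_of_mem_erase hy) hxy)
        ?_
      · have hKpos : 0 < K.card := Finset.card_pos.mpr ⟨k1, hk1⟩
        have hKcard : (K.erase k1).card = K.card - 1 := Finset.card_erase_of_mem hk1
        omega
      · rintro x hx' y hy' hxy ⟨z1, hz1', hz1y, hz1x⟩ ⟨z2, hz2', hz2x, hz2y⟩
        have hx := Finset.mem_of_mem_erase hx'
        have hy := Finset.mem_of_mem_erase hy'
        have hxa : x ≠ a := (Finset.mem_erase.mp hx').1
        have hya : y ≠ a := (Finset.mem_erase.mp hy').1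
        have hz2 := Finset.mem_of_mem_erase hz2'
        have hnot : ¬(x = t2 ∧ y = t) := by
          rintro ⟨rfl, rfl⟩
          exact absurd (ht2max z2 hz2 hz2y) (by omega)
        obtain ⟨k, hk, htk⟩ := cover x hx y hy hxy
          ⟨z1, Finset.mem_of_mem_erase hz1', hz1y, hz1x⟩ ⟨z2, hz2, hz2x, hz2y⟩
        refine ⟨k, Finset.mem_erase.mpr ⟨?_, hk⟩, htk⟩
        rintro rfl
        have htk3 : v k3 x + v k3 y = (x:ℝ) + 1 := by rw [← heq13]; exact htk
        have hxt : x ≠ t := by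
          intro h; subst h; exact absurd (htmax y hy) (by omega)
        have hyt : y = t := by rcases Sh1 x hx y hy hxy htk with h|h|h|h <;> omega
        have hxt2 : x = t2 := by rcases Sh3 x hx y hy hxy htk3 with h|h|h|h <;> omega
        exact hnot ⟨hxt2, hyt⟩
    by_cases heq24 : k2 = k4
    · -- delete b and k2
      have hcard' : (S.erase b).card = S.card - 1 := Finset.card_erase_of_mem hb
      have hres := ih (S.erase b) (K.erase k2) v (by omega) (by omega)
        (fun k hk x hx y hy hxy => feas k (Finset.mem_of_mem_erase hk) x
          (Finset.mem_of_mem_erase hx) y (Finset.mem_of_mem_erase hy) hxy)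
        ?_
      · have hKpos : 0 < K.card := Finset.card_pos.mpr ⟨k2, hk2⟩
        have hKcard : (K.erase k2).card = K.card - 1 := Finset.card_erase_of_mem hk2
        omega
      · rintro x hx' y hy' hxy ⟨z1, hz1', hz1y, hz1x⟩ ⟨z2, hz2', hz2x, hz2y⟩
        have hx := Finset.mem_of_mem_erase hx'
        have hy := Finset.mem_of_mem_erase hy'
        have hxb : x ≠ b := (Finset.mem_erase.mp hx').1
        have hyb : y ≠ b := (Finset.mem_erase.mp hy').1
        have hz2 := Finset.mem_of_mem_erase hz2'
        have hnot : ¬(x = t2 ∧ y = t) := by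
          rintro ⟨rfl, rfl⟩
          exact absurd (ht2max z2 hz2 hz2y) (by omega)
        obtain ⟨k, hk, htk⟩ := cover x hx y hy hxy
          ⟨z1, Finset.mem_of_mem_erase hz1', hz1y, hz1x⟩ ⟨z2, hz2, hz2x, hz2y⟩
        refine ⟨k, Finset.mem_erase.mpr ⟨?_, hk⟩, htk⟩
        rintro rfl
        have htk4 : v k4 x + v k4 y = (x:ℝ) + 1 := by rw [← heq24]; exact htk
        have hxt : x ≠ t := by
          intro h; subst h; exact absurd (htmax y hy) (by omega)
        have hyt : y = t := by rcases Sh2 x hx y hy hxy htk with h|h|h|h <;> omega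
        have hxt2 : x = t2 := by rcases Sh4 x hx y hy hxy htk4 with h|h|h|h <;> omega
        exact hnot ⟨hxt2, hyt⟩
    by_cases heq12 : k1 = k2
    · -- delete t and k1
      have hcard' : (S.erase t).card = S.card - 1 := Finset.card_erase_of_mem ht
      have hres := ih (S.erase t) (K.erase k1) v (by omega) (by omega)
        (fun k hk x hx y hy hxy => feas k (Finset.mem_of_mem_erase hk) x
          (Finset.mem_of_mem_erase hx) y (Finset.mem_of_mem_erase hy) hxy)
        ?_
      · have hKpos : 0 < K.card := Finset.card_pos.mpr ⟨k1, hk1⟩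
        have hKcard : (K.erase k1).card = K.card - 1 := Finset.card_erase_of_mem hk1
        omega
      · rintro x hx' y hy' hxy ⟨z1, hz1', hz1y, hz1x⟩ ⟨z2, hz2', hz2x, hz2y⟩
        have hx := Finset.mem_of_mem_erase hx'
        have hy := Finset.mem_of_mem_erase hy'
        have hxt : x ≠ t := (Finset.mem_erase.mp hx').1
        have hyt : y ≠ t := (Finset.mem_erase.mp hy').1
        have hz1 := Finset.mem_of_mem_erase hz1'
        have hnot : ¬(x = a ∧ y = b) := by
          rintro ⟨rfl, rfl⟩
          exact absurd (hbmin z1 hz1 hz1x) (by omega)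
        obtain ⟨k, hk, htk⟩ := cover x hx y hy hxy
          ⟨z1, hz1, hz1y, hz1x⟩ ⟨z2, Finset.mem_of_mem_erase hz2', hz2x, hz2y⟩
        refine ⟨k, Finset.mem_erase.mpr ⟨?_, hk⟩, htk⟩
        rintro rfl
        have htk2 : v k2 x + v k2 y = (x:ℝ) + 1 := by rw [← heq12]; exact htk
        have hya : y ≠ a := by
          intro h; subst h; exact absurd (hamin x hx) (by omega)
        have hxa : x = a := by rcases Sh1 x hx y hy hxy htk with h|h|h|h <;> omega
        have hyb : y = b := by rcases Sh2 x hx y hy hxy htk2 with h|h|h|h <;> omega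
        exact hnot ⟨hxa, hyb⟩
    by_cases heq34 : k3 = k4
    · -- delete t2 and k3
      have hcard' : (S.erase t2).card = S.card - 1 := Finset.card_erase_of_mem ht2
      have hres := ih (S.erase t2) (K.erase k3) v (by omega) (by omega)
        (fun k hk x hx y hy hxy => feas k (Finset.mem_of_mem_erase hk) x
          (Finset.mem_of_mem_erase hx) y (Finset.mem_of_mem_erase hy) hxy)
        ?_
      · have hKpos : 0 < K.card := Finset.card_pos.mpr ⟨k3, hk3⟩
        have hKcard : (K.erase k3).card = K.card - 1 := Finset.card_erase_of_mem hk3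
        omega
      · rintro x hx' y hy' hxy ⟨z1, hz1', hz1y, hz1x⟩ ⟨z2, hz2', hz2x, hz2y⟩
        have hx := Finset.mem_of_mem_erase hx'
        have hy := Finset.mem_of_mem_erase hy'
        have hxt2 : x ≠ t2 := (Finset.mem_erase.mp hx').1
        have hyt2 : y ≠ t2 := (Finset.mem_erase.mp hy').1
        have hz1 := Finset.mem_of_mem_erase hz1'
        have hnot : ¬(x = a ∧ y = b) := by
          rintro ⟨rfl, rfl⟩
          exact absurd (hbmin z1 hz1 hz1x) (by omega)
        obtain ⟨k, hk, htk⟩ := cover x hx y hy hxy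
          ⟨z1, hz1, hz1y, hz1x⟩ ⟨z2, Finset.mem_of_mem_erase hz2', hz2x, hz2y⟩
        refine ⟨k, Finset.mem_erase.mpr ⟨?_, hk⟩, htk⟩
        rintro rfl
        have htk4 : v k4 x + v k4 y = (x:ℝ) + 1 := by rw [← heq34]; exact htk
        have hya : y ≠ a := by
          intro h; subst h; exact absurd (hamin x hx) (by omega)
        have hxa : x = a := by rcases Sh3 x hx y hy hxy htk with h|h|h|h <;> omega
        have hyb : y = b := by rcases Sh4 x hx y hy hxy htk4 with h|h|h|h <;> omega
        exact hnot ⟨hxa, hyb⟩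
    -- all four distinct
    have hne14 : k1 ≠ k4 := by
      rintro rfl
      rcases Sh1 b hb t2 ht2 hbt2 htight4 with h|h|h|h <;> omega
    have hne23 : k2 ≠ k3 := by
      rintro rfl
      rcases Sh2 a ha t2 ht2 (hab.trans hbt2) htight3 with h|h|h|h <;> omega
    have hsubK : ({k1, k2, k3, k4} : Finset ι) ⊆ K := by
      intro z hz
      simp only [Finset.mem_insert, Finset.mem_singleton] at hz
      rcases hz with rfl|rfl|rfl|rfl <;> assumption
    have hcard4 : ({k1, k2, k3, k4} : Finset ι).card = 4 := by
      rw [Finset.card_insert_of_notMem (by simp [heq12, heq13, hne14]),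
          Finset.card_insert_of_notMem (by simp [heq24, hne23]),
          Finset.card_insert_of_notMem (by simp [heq34]),
          Finset.card_singleton]
    have hK4 : 4 ≤ K.card := hcard4 ▸ Finset.card_le_card hsubK
    by_cases hc6 : S.card ≤ 6
    · omega
    push_neg at hc6
    -- delete a, b, t, t2 and k1, k2, k3, k4
    have htne : t ≠ a ∧ t ≠ b ∧ t2 ≠ a ∧ t2 ≠ b := by omega
    set S' := (((S.erase a).erase b).erase t).erase t2 with hS'_def
    have hmemS' : ∀ z, z ∈ S' ↔ z ∈ S ∧ z ≠ a ∧ z ≠ b ∧ z ≠ t ∧ z ≠ t2 := by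
      intro z
      simp only [hS'_def, Finset.mem_erase]
      tauto
    have hcardS' : S'.card = S.card - 4 := by
      rw [hS'_def]
      rw [Finset.card_erase_of_mem, Finset.card_erase_of_mem, Finset.card_erase_of_mem,
          Finset.card_erase_of_mem ha]
      · omega
      · exact Finset.mem_erase.mpr ⟨by omega, hb⟩
      · exact Finset.mem_erase.mpr ⟨by omega, Finset.mem_erase.mpr ⟨by omega, ht⟩⟩
      · exact Finset.mem_erase.mpr ⟨by omega,
          Finset.mem_erase.mpr ⟨by omega, Finset.mem_erase.mpr ⟨by omega, ht2⟩⟩⟩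
    set K' := (((K.erase k1).erase k2).erase k3).erase k4 with hK'_def
    have hmemK' : ∀ k, k ∈ K' ↔ k ∈ K ∧ k ≠ k1 ∧ k ≠ k2 ∧ k ≠ k3 ∧ k ≠ k4 := by
      intro k
      simp only [hK'_def, Finset.mem_erase]
      tauto
    have hcardK' : K'.card = K.card - 4 := by
      rw [hK'_def]
      rw [Finset.card_erase_of_mem, Finset.card_erase_of_mem, Finset.card_erase_of_mem,
          Finset.card_erase_of_mem hk1]
      · omega
      · exact Finset.mem_erase.mpr ⟨Ne.symm heq12, hk2⟩
      · exact Finset.mem_erase.mpr ⟨Ne.symm hne23,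
          Finset.mem_erase.mpr ⟨Ne.symm heq13, hk3⟩⟩
      · exact Finset.mem_erase.mpr ⟨Ne.symm heq34,
          Finset.mem_erase.mpr ⟨Ne.symm heq24,
            Finset.mem_erase.mpr ⟨Ne.symm hne14, hk4⟩⟩⟩
    have hres := ih S' K' v (by omega) (by omega)
      (fun k hk x hx y hy hxy => feas k ((hmemK' k).mp hk).1 x
        ((hmemS' x).mp hx).1 y ((hmemS' y).mp hy).1 hxy)
      ?_
    · omega
    · rintro x hx' y hy' hxy ⟨z1, hz1', hz1y, hz1x⟩ ⟨z2, hz2', hz2x, hz2y⟩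
      obtain ⟨hx, hxa, hxb, hxt, hxt2⟩ := (hmemS' x).mp hx'
      obtain ⟨hy, hya, hyb, hyt, hyt2⟩ := (hmemS' y).mp hy'
      obtain ⟨k, hk, htk⟩ := cover x hx y hy hxy
        ⟨z1, ((hmemS' z1).mp hz1').1, hz1y, hz1x⟩ ⟨z2, ((hmemS' z2).mp hz2').1, hz2x, hz2y⟩
      refine ⟨k, (hmemK' k).mpr ⟨hk, ?_, ?_, ?_, ?_⟩, htk⟩
      · rintro rfl; rcases Sh1 x hx y hy hxy htk with h|h|h|h <;> omega
      · rintro rfl; rcases Sh2 x hx y hy hxy htk with h|h|h|h <;> omega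
      · rintro rfl; rcases Sh3 x hx y hy hxy htk with h|h|h|h <;> omega
      · rintro rfl; rcases Sh4 x hx y hy hxy htk with h|h|h|h <;> omega


theorem stmt8 (n : ℕ) (hn : 3 ≤ n) :
    StarRankLe (n - 2) (minMatrix n) ∧
    ∀ r : ℕ, StarRankLe r (minMatrix n) → n - 2 ≤ r := by
  refine ⟨upper n hn, ?_⟩
  rintro r ⟨v, hd⟩
  classical
  set vv : Fin r → ℕ → ℝ := fun k x => if h : x < n then v k ⟨x, h⟩ else 0 with hvv
  have key := lowerMain n (Finset.range n) (Finset.univ : Finset (Fin r)) vv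
    (by simp) (by simp [hn]) ?_ ?_
  · simpa using key
  · -- feasibility
    intro k _ x hx y hy hxy
    have hxn : x < n := Finset.mem_range.mp hx
    have hyn : y < n := Finset.mem_range.mp hy
    have hne : (⟨x, hxn⟩ : Fin n) ≠ ⟨y, hyn⟩ :=
      Fin.ne_of_val_ne (by simpa using Nat.ne_of_lt hxy)
    have := (hd ⟨x, hxn⟩ ⟨y, hyn⟩ hne).1 k
    have hM : minMatrix n ⟨x, hxn⟩ ⟨y, hyn⟩ = (x:ℝ) + 1 := by
      unfold minMatrix
      simp only [Fin.val_mk]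
      have : min (x+1) (y+1) = x + 1 := by omega
      rw [this]; push_cast; ring
    rw [hM] at this
    simpa [hvv, hxn, hyn] using this
  · -- coverage
    intro x hx y hy hxy _ _
    have hxn : x < n := Finset.mem_range.mp hx
    have hyn : y < n := Finset.mem_range.mp hy
    have hne : (⟨x, hxn⟩ : Fin n) ≠ ⟨y, hyn⟩ :=
      Fin.ne_of_val_ne (by simpa using Nat.ne_of_lt hxy)
    obtain ⟨k, hk⟩ := (hd ⟨x, hxn⟩ ⟨y, hyn⟩ hne).2
    have hM : minMatrix n ⟨x, hxn⟩ ⟨y, hyn⟩ = (x:ℝ) + 1 := by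
      unfold minMatrix
      simp only [Fin.val_mk]
      have : min (x+1) (y+1) = x + 1 := by omega
      rw [this]; push_cast; ring
    refine ⟨k, Finset.mem_univ k, ?_⟩
    rw [hM] at hk
    simpa [hvv, hxn, hyn] using hk.symm
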